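/- Let C₀ ≥ 1. There exists a constant C ≥ 1, depending only on κ and C₀, such that the following holds (Lemma 2.7, bound on generalized flows). Let d ≥ 1, κ > 1, Ũ ≥ U ≥ 1, t ≥ 1/Ũ, and x_min ≥ (Ũt)^{κ/(κ-1)}. Let u₀ : ℝ^d → ℝ^d satisfy ‖u₀(w)‖ ≤ U(1 + ‖w‖)^{1/κ} for all w. Let 𝒳 : [0,t] × ℝ^d → ℝ^d satisfy ‖𝒳(s,y) − y‖ ≤ C₀·Ũt·max(x_min, ‖y‖)^{1/κ} for all (s,y). Then every differentiable curve y : [0,t] → ℝ^d with y(0) = x and y'(s) = u₀(𝒳(s, y(s))) for all s ∈ [0,t] satisfies ‖y(s) − x‖ ≤ C·Ut·max(Ũt·x_min^{1/κ}, ‖x‖)^{1/κ} for all s ∈ [0,t]. -/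

import Mathlib

set_option maxHeartbeats 1000000

open Set Real

/-- Mean value inequality for `rpow`: `(X+ε)^p - X^p ≤ p (X+ε)^{p-1} ε`. -/
lemma rpow_mvt_aux {p X ε : ℝ} (hp : 1 ≤ p) (hX : 1 ≤ X) (hε : 0 ≤ ε) :
    (X + ε) ^ p - X ^ p ≤ p * (X + ε) ^ (p - 1) * ε := by
  have hX0 : (0 : ℝ) < X := by linarith
  have hp0 : (0 : ℝ) ≤ p := by linarith
  have key := Convex.norm_image_sub_le_of_norm_hasDerivWithin_le
    (f := fun z : ℝ => z ^ p) (f' := fun z : ℝ => p * z ^ (p - 1))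
    (s := Set.Icc X (X + ε)) (C := p * (X + ε) ^ (p - 1))
    (fun z _ => (Real.hasDerivAt_rpow_const (Or.inr hp)).hasDerivWithinAt)
    (fun z hz => by
      have hz0 : (0 : ℝ) ≤ z := le_trans hX0.le hz.1
      have h1 : z ^ (p - 1) ≤ (X + ε) ^ (p - 1) :=
        Real.rpow_le_rpow hz0 hz.2 (by linarith)
      have h2 : (0 : ℝ) ≤ z ^ (p - 1) := Real.rpow_nonneg hz0 _
      rw [Real.norm_eq_abs, abs_of_nonneg (by positivity)]
      exact mul_le_mul_of_nonneg_left h1 hp0)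
    (convex_Icc _ _)
    (Set.left_mem_Icc.2 (by linarith))
    (Set.right_mem_Icc.2 (by linarith))
  rw [Real.norm_eq_abs, Real.norm_eq_abs] at key
  have h3 : |(X + ε) - X| = ε := by rw [add_sub_cancel_left, abs_of_nonneg hε]
  rw [h3] at key
  calc (X + ε) ^ p - X ^ p ≤ |(X + ε) ^ p - X ^ p| := le_abs_self _
    _ ≤ p * (X + ε) ^ (p - 1) * ε := key

theorem generalized_flow_bound (κ C₀ : ℝ) (hκ : 1 < κ) (hC₀ : 1 ≤ C₀) :
    ∃ C : ℝ, 1 ≤ C ∧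
      ∀ (d : ℕ), 1 ≤ d →
        ∀ U U' t xmin : ℝ, 1 ≤ U → U ≤ U' → 1 / U' ≤ t →
          (U' * t) ^ (κ / (κ - 1)) ≤ xmin →
          ∀ u₀ : EuclideanSpace ℝ (Fin d) → EuclideanSpace ℝ (Fin d),
            (∀ w, ‖u₀ w‖ ≤ U * (1 + ‖w‖) ^ (1 / κ)) →
            ∀ 𝒳 : ℝ → EuclideanSpace ℝ (Fin d) → EuclideanSpace ℝ (Fin d),
              (∀ s ∈ Set.Icc (0 : ℝ) t, ∀ w,
                ‖𝒳 s w - w‖ ≤ C₀ * (U' * t) * (max xmin ‖w‖) ^ (1 / κ)) →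
              ∀ x : EuclideanSpace ℝ (Fin d),
                ∀ y : ℝ → EuclideanSpace ℝ (Fin d), y 0 = x →
                  (∀ s ∈ Set.Icc (0 : ℝ) t, HasDerivAt y (u₀ (𝒳 s (y s))) s) →
                  ∀ s ∈ Set.Icc (0 : ℝ) t,
                    ‖y s - x‖ ≤
                      C * (U * t) * (max (U' * t * xmin ^ (1 / κ)) ‖x‖) ^ (1 / κ) := by
  have hκ0 : (0 : ℝ) < κ := by linarith
  have hκ1 : (0 : ℝ) < κ - 1 := by linarith
  set p : ℝ := κ / (κ - 1) with hp_def
  have hp1 : 1 < p := by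
    rw [hp_def, lt_div_iff₀ hκ1]; linarith
  have hp0 : (0 : ℝ) < p := by linarith
  have hκinv : (0 : ℝ) < 1 / κ := by positivity
  have hκinv1 : 1 / κ ≤ 1 := by
    rw [div_le_one hκ0]; linarith
  -- exponent identities
  have hppinv : (1 / p) * p = 1 := by field_simp
  have hpκ : p * (1 / κ) = p - 1 := by
    rw [hp_def]; field_simp; ring
  have hpinvκ : (1 / p) * (p - 1) = 1 / κ := by
    rw [hp_def]; field_simp; ring
  have hsum : 1 / p + 1 / κ = 1 := by
    rw [hp_def]; field_simp; ring
  set c : ℝ := 4 * C₀ with hc_def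
  have hc1 : (1 : ℝ) ≤ c := by rw [hc_def]; linarith
  have hc0 : (0 : ℝ) < c := by linarith
  refine ⟨p * (1 + c) ^ (p - 1) * c, ?_, ?_⟩
  · have h1 : (1 : ℝ) ≤ (1 + c) ^ (p - 1) :=
      Real.one_le_rpow (by linarith) (by linarith)
    have h2 : (1 : ℝ) * 1 ≤ p * (1 + c) ^ (p - 1) :=
      mul_le_mul hp1.le h1 zero_le_one (by linarith)
    have h3 : ((1 : ℝ) * 1) * 1 ≤ (p * (1 + c) ^ (p - 1)) * c :=
      mul_le_mul h2 hc1 zero_le_one (by linarith)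
    linarith
  intro d _ U U' t xmin hU1 hUU' ht hxm u₀ hu₀ 𝒳 h𝒳 x y hy0 hy' s hs
  have hU'1 : (1 : ℝ) ≤ U' := le_trans hU1 hUU'
  have hU'0 : (0 : ℝ) < U' := by linarith
  have ht0 : (0 : ℝ) < t := lt_of_lt_of_le (by positivity) ht
  have hA1 : (1 : ℝ) ≤ U' * t := by
    have := mul_le_mul_of_nonneg_left ht hU'0.le
    rwa [mul_one_div, div_self hU'0.ne'] at this
  have hA0 : (0 : ℝ) < U' * t := by linarith
  have hxmin1 : (1 : ℝ) ≤ xmin := by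
    calc (1 : ℝ) = 1 ^ p := (Real.one_rpow p).symm
      _ ≤ (U' * t) ^ p := Real.rpow_le_rpow zero_le_one hA1 hp0.le
      _ ≤ xmin := hxm
  have hxmin0 : (0 : ℝ) < xmin := by linarith
  -- A ≤ xmin ^ (1/p)
  have hAxmin : U' * t ≤ xmin ^ (1 / p) := by
    calc U' * t = ((U' * t) ^ p) ^ (1 / p) := by
          rw [← Real.rpow_mul hA0.le, mul_one_div, div_self hp0.ne', Real.rpow_one]
      _ ≤ xmin ^ (1 / p) := Real.rpow_le_rpow (by positivity) hxm (by positivity)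
  set M : ℝ := max (U' * t * xmin ^ (1 / κ)) ‖x‖ with hM_def
  have hxminκ1 : (1 : ℝ) ≤ xmin ^ (1 / κ) := Real.one_le_rpow hxmin1 hκinv.le
  have hM1 : (1 : ℝ) ≤ M :=
    le_trans (by
      calc (1 : ℝ) = 1 * 1 := (one_mul 1).symm
        _ ≤ U' * t * xmin ^ (1 / κ) :=
          mul_le_mul hA1 hxminκ1 zero_le_one (by linarith)) (le_max_left _ _)
  have hM0 : (0 : ℝ) < M := by linarith
  have hxM : ‖x‖ ≤ M := le_max_right _ _
  -- (U'*t)^p ≤ M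
  have hApM : (U' * t) ^ p ≤ M := by
    have h1 : (U' * t) ^ (p - 1) ≤ xmin ^ (1 / κ) := by
      calc (U' * t) ^ (p - 1) = ((U' * t) ^ p) ^ (1 / κ) := by
            rw [← Real.rpow_mul hA0.le, hpκ]
        _ ≤ xmin ^ (1 / κ) := Real.rpow_le_rpow (by positivity) hxm hκinv.le
    calc (U' * t) ^ p = (U' * t) ^ (1 + (p - 1)) := by
          rw [show (1 : ℝ) + (p - 1) = p by ring]
      _ = (U' * t) * (U' * t) ^ (p - 1) := by
          rw [Real.rpow_add hA0, Real.rpow_one]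
      _ ≤ (U' * t) * xmin ^ (1 / κ) := mul_le_mul_of_nonneg_left h1 hA0.le
      _ ≤ M := le_max_left _ _
  have hAM : U' * t ≤ M ^ (1 / p) := by
    calc U' * t = ((U' * t) ^ p) ^ (1 / p) := by
          rw [← Real.rpow_mul hA0.le, mul_one_div, div_self hp0.ne', Real.rpow_one]
      _ ≤ M ^ (1 / p) := Real.rpow_le_rpow (by positivity) hApM (by positivity)
  -- key displacement estimate
  have hkey : ∀ z : ℝ, 0 ≤ z → U' * t * (max xmin z) ^ (1 / κ) ≤ M + z := by
    intro z hz
    rcases le_total z xmin with h | h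
    · rw [max_eq_left h]
      calc U' * t * xmin ^ (1 / κ) ≤ M := le_max_left _ _
        _ ≤ M + z := by linarith
    · rw [max_eq_right h]
      have hz1 : (1 : ℝ) ≤ z := le_trans hxmin1 h
      have hz0 : (0 : ℝ) < z := by linarith
      have h1 : U' * t ≤ z ^ (1 / p) :=
        le_trans hAxmin (Real.rpow_le_rpow hxmin0.le h (by positivity))
      calc U' * t * z ^ (1 / κ) ≤ z ^ (1 / p) * z ^ (1 / κ) :=
            mul_le_mul_of_nonneg_right h1 (Real.rpow_nonneg hz0.le _)
        _ = z := by rw [← Real.rpow_add hz0, hsum, Real.rpow_one]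
        _ ≤ M + z := by linarith
  set b : ℝ := M ^ (1 / p) with hb_def
  have hb1 : (1 : ℝ) ≤ b := Real.one_le_rpow hM1 (by positivity)
  have hb0 : (0 : ℝ) < b := by linarith
  have hbp : b ^ p = M := by
    rw [hb_def, ← Real.rpow_mul hM0.le, hppinv, Real.rpow_one]
  have hbp1 : b ^ (p - 1) = M ^ (1 / κ) := by
    rw [hb_def, ← Real.rpow_mul hM0.le, hpinvκ]
  set a : ℝ := U * c ^ (1 / κ) with ha_def
  have hcκ0 : (0 : ℝ) < c ^ (1 / κ) := Real.rpow_pos_of_pos hc0 _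
  have ha0 : (0 : ℝ) < a := by positivity
  have hac : a ≤ c * U := by
    have : c ^ (1 / κ) ≤ c := by
      calc c ^ (1 / κ) ≤ c ^ (1 : ℝ) := Real.rpow_le_rpow_of_exponent_le hc1 hκinv1
        _ = c := Real.rpow_one c
    rw [ha_def]
    calc U * c ^ (1 / κ) ≤ U * c := mul_le_mul_of_nonneg_left this (by linarith)
      _ = c * U := mul_comm _ _
  -- the barrier function
  set B : ℝ → ℝ := fun s => (b + a * s) ^ p - M with hB_def
  set B' : ℝ → ℝ := fun s => a * p * (b + a * s) ^ (p - 1) with hB'_def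
  have hBderiv : ∀ s : ℝ, HasDerivAt B (B' s) s := by
    intro s
    have h1 : HasDerivAt (fun s : ℝ => b + a * s) a s := by
      simpa using ((hasDerivAt_id s).const_mul a).const_add b
    have h2 := (h1.rpow_const (Or.inr hp1.le)).sub_const M
    simpa [hB_def, hB'_def] using h2
  have hfc : ContinuousOn (fun s => y s - x) (Set.Icc 0 t) := fun s hsI =>
    ((hy' s hsI).continuousAt.continuousWithinAt).sub continuousWithinAt_const
  have hfd : ∀ s ∈ Set.Ico (0 : ℝ) t,
      HasDerivWithinAt (fun s => y s - x) (u₀ (𝒳 s (y s))) (Set.Ici s) s := by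
    intro s hsI
    exact ((hy' s ⟨hsI.1, hsI.2.le⟩).sub_const x).hasDerivWithinAt
  have hB0 : ‖y 0 - x‖ ≤ B 0 := by
    rw [hy0]
    simp [hB_def, hbp]
  have hbound : ∀ s ∈ Set.Ico (0 : ℝ) t, ‖y s - x‖ = B s →
      ‖u₀ (𝒳 s (y s))‖ < B' s := by
    intro s hsI heq
    have hsIcc : s ∈ Set.Icc (0 : ℝ) t := ⟨hsI.1, hsI.2.le⟩
    set φ : ℝ := ‖y s - x‖ with hφ_def
    have hφ0 : (0 : ℝ) ≤ φ := norm_nonneg _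
    have hbas0 : (0 : ℝ) < b + a * s := by
      have := mul_nonneg ha0.le hsI.1
      linarith
    have hys : ‖y s‖ ≤ M + φ := by
      calc ‖y s‖ = ‖(y s - x) + x‖ := by rw [sub_add_cancel]
        _ ≤ ‖y s - x‖ + ‖x‖ := norm_add_le _ _
        _ ≤ M + φ := by rw [← hφ_def]; linarith
    have hX : ‖𝒳 s (y s)‖ ≤ ‖y s‖ + C₀ * (U' * t) * (max xmin ‖y s‖) ^ (1 / κ) := by
      calc ‖𝒳 s (y s)‖ = ‖(𝒳 s (y s) - y s) + y s‖ := by rw [sub_add_cancel]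
        _ ≤ ‖𝒳 s (y s) - y s‖ + ‖y s‖ := norm_add_le _ _
        _ ≤ C₀ * (U' * t) * (max xmin ‖y s‖) ^ (1 / κ) + ‖y s‖ := by
            linarith [h𝒳 s hsIcc (y s)]
        _ = _ := by ring
    have hdisp : C₀ * (U' * t) * (max xmin ‖y s‖) ^ (1 / κ) ≤ C₀ * (M + ‖y s‖) := by
      have := hkey ‖y s‖ (norm_nonneg _)
      calc C₀ * (U' * t) * (max xmin ‖y s‖) ^ (1 / κ)
          = C₀ * (U' * t * (max xmin ‖y s‖) ^ (1 / κ)) := by ring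
        _ ≤ C₀ * (M + ‖y s‖) := mul_le_mul_of_nonneg_left this (by linarith)
    have h4 : 1 + ‖𝒳 s (y s)‖ ≤ c * (M + φ) := by
      have hyn : (0 : ℝ) ≤ ‖y s‖ := norm_nonneg _
      have hCM : (1 : ℝ) ≤ C₀ * M := by
        calc (1 : ℝ) = 1 * 1 := (one_mul 1).symm
          _ ≤ C₀ * M := mul_le_mul hC₀ hM1 zero_le_one (by linarith)
      have hMCM : M ≤ C₀ * M := le_mul_of_one_le_left (by linarith) hC₀
      have hφC : φ ≤ C₀ * φ := le_mul_of_one_le_left hφ0 hC₀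
      have hφC0 : (0 : ℝ) ≤ C₀ * φ := mul_nonneg (by linarith) hφ0
      have hyC : C₀ * ‖y s‖ ≤ C₀ * (M + φ) :=
        mul_le_mul_of_nonneg_left hys (by linarith)
      rw [hc_def]
      linarith [hX, hdisp, hys]
    have heq2 : M + φ = (b + a * s) ^ p := by
      have : φ = (b + a * s) ^ p - M := heq
      linarith
    have h5 : ‖u₀ (𝒳 s (y s))‖ ≤ a * (b + a * s) ^ (p - 1) := by
      have h6 : (1 + ‖𝒳 s (y s)‖) ^ (1 / κ) ≤ (c * (M + φ)) ^ (1 / κ) :=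
        Real.rpow_le_rpow (by positivity) h4 hκinv.le
      have h7 : (c * (M + φ)) ^ (1 / κ) = c ^ (1 / κ) * (b + a * s) ^ (p - 1) := by
        rw [heq2, Real.mul_rpow hc0.le (Real.rpow_nonneg hbas0.le _),
          ← Real.rpow_mul hbas0.le, hpκ]
      calc ‖u₀ (𝒳 s (y s))‖ ≤ U * (1 + ‖𝒳 s (y s)‖) ^ (1 / κ) := hu₀ _
        _ ≤ U * (c * (M + φ)) ^ (1 / κ) :=
            mul_le_mul_of_nonneg_left h6 (by linarith)
        _ = a * (b + a * s) ^ (p - 1) := by rw [h7, ha_def]; ring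
    have h8 : a * (b + a * s) ^ (p - 1) < B' s := by
      have hpow : (0 : ℝ) < (b + a * s) ^ (p - 1) := Real.rpow_pos_of_pos hbas0 _
      simp only [hB'_def]
      have h9 : (0 : ℝ) < a * (b + a * s) ^ (p - 1) * (p - 1) :=
        mul_pos (mul_pos ha0 hpow) (sub_pos.2 hp1)
      have h10 : a * p * (b + a * s) ^ (p - 1)
          = a * (b + a * s) ^ (p - 1) + a * (b + a * s) ^ (p - 1) * (p - 1) := by
        ring
      linarith
    exact lt_of_le_of_lt h5 h8
  have hmain := image_norm_le_of_norm_deriv_right_lt_deriv_boundary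
    hfc hfd hB0 hBderiv hbound hs
  -- final conversion
  have hsle : s ≤ t := hs.2
  have hs0 : (0 : ℝ) ≤ s := hs.1
  have hBmono : B s ≤ B t := by
    rw [hB_def]
    have h1 : b + a * s ≤ b + a * t := by
      have := mul_le_mul_of_nonneg_left hsle ha0.le
      linarith
    have h2 : (0 : ℝ) ≤ b + a * s := by
      have := mul_nonneg ha0.le hs0
      linarith
    have := Real.rpow_le_rpow h2 h1 hp0.le
    simpa using sub_le_sub_right this M
  have hat0 : (0 : ℝ) ≤ a * t := by positivity
  have hmvt : (b + a * t) ^ p - b ^ p ≤ p * (b + a * t) ^ (p - 1) * (a * t) :=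
    rpow_mvt_aux hp1.le hb1 hat0
  have hatb : a * t ≤ c * (U * t) := by
    have := mul_le_mul_of_nonneg_right hac ht0.le
    linarith [this]
  have hUtb : U * t ≤ b := by
    rw [hb_def]
    calc U * t ≤ U' * t := mul_le_mul_of_nonneg_right hUU' ht0.le
      _ ≤ M ^ (1 / p) := hAM
  have hbatb : b + a * t ≤ (1 + c) * b := by
    have := mul_le_mul_of_nonneg_left hUtb hc0.le
    linarith [hatb]
  have hfin : p * (b + a * t) ^ (p - 1) * (a * t)
      ≤ p * (1 + c) ^ (p - 1) * c * (U * t) * M ^ (1 / κ) := by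
    have h1 : (b + a * t) ^ (p - 1) ≤ ((1 + c) * b) ^ (p - 1) :=
      Real.rpow_le_rpow (by positivity) hbatb (by linarith)
    have h2 : ((1 + c) * b) ^ (p - 1) = (1 + c) ^ (p - 1) * M ^ (1 / κ) := by
      rw [Real.mul_rpow (by linarith) hb0.le, hbp1]
    have h3 : (0 : ℝ) < (1 + c) ^ (p - 1) := Real.rpow_pos_of_pos (by linarith) _
    have h4 : (0 : ℝ) < M ^ (1 / κ) := Real.rpow_pos_of_pos hM0 _
    have h5 : (0 : ℝ) ≤ (b + a * t) ^ (p - 1) := Real.rpow_nonneg (by positivity) _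
    calc p * (b + a * t) ^ (p - 1) * (a * t)
        ≤ p * ((1 + c) ^ (p - 1) * M ^ (1 / κ)) * (a * t) := by
          rw [← h2]
          exact mul_le_mul_of_nonneg_right
            (mul_le_mul_of_nonneg_left h1 hp0.le) hat0
      _ ≤ p * ((1 + c) ^ (p - 1) * M ^ (1 / κ)) * (c * (U * t)) := by
          have h0 : (0 : ℝ) ≤ p * ((1 + c) ^ (p - 1) * M ^ (1 / κ)) := by positivity
          exact mul_le_mul_of_nonneg_left hatb h0
      _ = p * (1 + c) ^ (p - 1) * c * (U * t) * M ^ (1 / κ) := by ring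
  calc ‖y s - x‖ ≤ B s := hmain
    _ ≤ B t := hBmono
    _ = (b + a * t) ^ p - b ^ p := by rw [hB_def, hbp]
    _ ≤ p * (b + a * t) ^ (p - 1) * (a * t) := hmvt
    _ ≤ p * (1 + c) ^ (p - 1) * c * (U * t) * M ^ (1 / κ) := hfin
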